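/- Let φ be an exponential map on an integral domain A over a field k. Extend φ to a homomorphism φ : Frac(A) → Frac(A[U]) by φ(a b^{−1}) = φ(a) φ(b)^{−1}, and let Frac(A)^φ = {f ∈ Frac(A) | φ(f) = f}. Then Frac(A)^φ equals the fraction field of A^φ viewed inside Frac(A), i.e., Frac(A)^φ = Frac(A^φ). -/
import Mathlib


open Polynomial

/-- An exponential map on a `k`-algebra `A`: a `k`-algebra homomorphism `φ : A → A[U]`
such that evaluating at `U = 0` is the identity and `φ_S φ_U = φ_{S+U}`. -/
def IsExpMap {k A : Type*} [CommSemiring k] [CommSemiring A] [Algebra k A]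
    (φ : A →ₐ[k] A[X]) : Prop :=
  (∀ a : A, (φ a).eval 0 = a) ∧
  (∀ a : A,
    eval₂ ((mapRingHom (C : A →+* A[X])).comp (φ : A →+* A[X])) (C X) (φ a)
      = eval₂ ((C : A[X] →+* A[X][X]).comp (C : A →+* A[X])) (X + C X) (φ a))

/-- The ring of `φ`-invariants `A^φ = {a : A | φ a = a}`. -/
noncomputable def expInv {k A : Type*} [CommSemiring k] [CommSemiring A] [Algebra k A]
    (φ : A →ₐ[k] A[X]) : Subalgebra k A :=
  AlgHom.equalizer φ (IsScalarTower.toAlgHom k A A[X])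

/-- The AK invariant: the intersection of the rings of invariants of all exponential maps. -/
noncomputable def AK (k A : Type*) [CommSemiring k] [CommSemiring A] [Algebra k A] : Subalgebra k A :=
  ⨅ φ ∈ {ψ : A →ₐ[k] A[X] | IsExpMap ψ}, expInv φ


lemma expMap_coeff {k A : Type*} [CommSemiring k] [CommSemiring A] [Algebra k A]
    (φ : A →ₐ[k] A[X]) (hφ : IsExpMap φ) (a : A) (n j : ℕ) :
    (φ ((φ a).coeff n)).coeff j = (n + j).choose j * (φ a).coeff (n + j) := by
  have h := congrArg (fun q : A[X][X] => (q.coeff j).coeff n) (hφ.2 a)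
  simp only [eval₂_eq_sum, sum_def, finset_sum_coeff] at h
  -- LHS simplification
  have hL : ∀ i ∈ (φ a).support,
      ((((mapRingHom (C : A →+* A[X])).comp (φ : A →+* A[X])) ((φ a).coeff i) * C X ^ i).coeff j).coeff n
      = if n = i then (φ ((φ a).coeff i)).coeff j else 0 := by
    intro i _
    rw [← C_pow, coeff_mul_C]
    simp [coeff_map, coeff_C_mul, coeff_X_pow, mul_ite]
  have hR : ∀ i ∈ (φ a).support,
      ((((C : A[X] →+* A[X][X]).comp (C : A →+* A[X])) ((φ a).coeff i) * (X + C X) ^ i).coeff j).coeff n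
      = if i = n + j then ((n+j).choose j : A) * (φ a).coeff (n + j) else 0 := by
    intro i _
    rw [RingHom.comp_apply, coeff_C_mul, coeff_X_add_C_pow, ← C_eq_natCast,
      coeff_C_mul, coeff_mul_C, coeff_X_pow]
    by_cases hij : i = n + j
    · subst hij
      simp [Nat.add_sub_cancel, mul_comm]
    · by_cases hn : n = i - j
      · rcases le_or_gt j i with hji | hji
        · exact absurd (by omega) hij
        · simp [Nat.choose_eq_zero_of_lt hji, hij]
      · simp [hn, hij]
  rw [Finset.sum_congr rfl hL, Finset.sum_congr rfl hR, Finset.sum_ite_eq, Finset.sum_ite_eq'] at h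
  by_cases hn : n ∈ (φ a).support
  · rw [if_pos hn] at h
    by_cases hnj : n + j ∈ (φ a).support
    · rw [if_pos hnj] at h; exact h
    · rw [if_neg hnj] at h
      rw [h, notMem_support_iff.mp hnj, mul_zero]
  · rw [if_neg hn] at h
    rw [notMem_support_iff.mp hn, map_zero, coeff_zero]
    by_cases hnj : n + j ∈ (φ a).support
    · rw [if_pos hnj] at h; exact h.symm ▸ h
    · rw [notMem_support_iff.mp hnj, mul_zero]
lemma expMap_leadCoeff_mem {k A : Type*} [CommSemiring k] [CommSemiring A] [Algebra k A]
    (φ : A →ₐ[k] A[X]) (hφ : IsExpMap φ) (a : A) :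
    (φ a).coeff (φ a).natDegree ∈ expInv φ := by
  rw [expInv, AlgHom.mem_equalizer, IsScalarTower.toAlgHom_apply, Polynomial.algebraMap_eq]
  ext j
  rw [expMap_coeff φ hφ, coeff_C]
  cases j with
  | zero => simp
  | succ m =>
    rw [coeff_eq_zero_of_natDegree_lt (by omega), mul_zero]
    simp


/-- Extend an exponential map `φ` on a domain `A` to a homomorphism
`φ' : Frac(A) → Frac(A[U])` by `φ'(a b⁻¹) = φ(a) φ(b)⁻¹`, and let
`ι : Frac(A) → Frac(A[U])` be the canonical embedding (extending `a ↦ a`). Then the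
`φ'`-invariant elements of `Frac(A)` are exactly the quotients of elements of `A^φ`,
i.e. `Frac(A)^φ = Frac(A^φ)`. -/
theorem statement12 {k A : Type*} [Field k] [CommRing A] [IsDomain A] [Algebra k A]
    (φ : A →ₐ[k] A[X]) (hφ : IsExpMap φ)
    (φ' : FractionRing A →+* FractionRing A[X])
    (hφ' : ∀ a : A, φ' (algebraMap A (FractionRing A) a)
        = algebraMap A[X] (FractionRing A[X]) (φ a))
    (ι : FractionRing A →+* FractionRing A[X])
    (hι : ∀ a : A, ι (algebraMap A (FractionRing A) a)
        = algebraMap A[X] (FractionRing A[X]) (C a)) :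
    ∀ f : FractionRing A, φ' f = ι f ↔
      ∃ a b : A, a ∈ expInv φ ∧ b ∈ expInv φ ∧ b ≠ 0 ∧
        f = algebraMap A (FractionRing A) a / algebraMap A (FractionRing A) b := by
  have hφinj : ∀ x : A, φ x = 0 → x = 0 := by
    intro x hx
    have := hφ.1 x
    rw [hx] at this
    simpa using this.symm
  have halg : ∀ p : A[X], algebraMap A[X] (FractionRing A[X]) p = 0 ↔ p = 0 := by
    intro p
    exact map_eq_zero_iff _ (IsFractionRing.injective A[X] (FractionRing A[X]))
  have halgA : ∀ x : A, algebraMap A (FractionRing A) x = 0 ↔ x = 0 := by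
    intro x
    exact map_eq_zero_iff _ (IsFractionRing.injective A (FractionRing A))
  intro f
  constructor
  · intro h
    obtain ⟨a, b, hbmem, hf⟩ := IsFractionRing.div_surjective (A := A) f
    have hb0 : b ≠ 0 := nonZeroDivisors.ne_zero hbmem
    by_cases ha0 : a = 0
    · refine ⟨0, 1, zero_mem _, one_mem _, one_ne_zero, ?_⟩
      rw [← hf, ha0]
      simp
    · have hφb : φ b ≠ 0 := fun h0 => hb0 (hφinj b h0)
      have hφa : φ a ≠ 0 := fun h0 => ha0 (hφinj a h0)
      have hCb : (C b : A[X]) ≠ 0 := by simpa using hb0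
      have hCa : (C a : A[X]) ≠ 0 := by simpa using ha0
      have key : φ a * C b = C a * φ b := by
        apply IsFractionRing.injective A[X] (FractionRing A[X])
        rw [map_mul, map_mul]
        rw [← hf, map_div₀, map_div₀, hφ', hφ', hι, hι] at h
        rw [div_eq_div_iff ((halg _).not.mpr hφb) ((halg _).not.mpr hCb)] at h
        exact h
      set n := (φ a).natDegree with hn
      have hdeg : (φ b).natDegree = n := by
        have h2 := congrArg natDegree key
        rw [natDegree_mul hφa hCb, natDegree_mul hCa hφb, natDegree_C, natDegree_C] at h2
        omega
      have hcoeff := congrArg (fun p : A[X] => p.coeff n) key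
      simp only [coeff_mul_C, coeff_C_mul] at hcoeff
      have hb1 : (φ b).coeff n ≠ 0 := by
        rw [← hdeg]
        exact fun h0 => hφb (leadingCoeff_eq_zero.mp h0)
      refine ⟨(φ a).coeff n, (φ b).coeff n, expMap_leadCoeff_mem φ hφ a,
        hdeg ▸ expMap_leadCoeff_mem φ hφ b, hb1, ?_⟩
      rw [← hf, div_eq_div_iff ((halgA _).not.mpr hb0) ((halgA _).not.mpr hb1),
        ← map_mul, ← map_mul]
      exact congrArg _ (by rw [mul_comm a ((φ b).coeff n)] at hcoeff; rw [mul_comm, hcoeff, mul_comm])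
  · rintro ⟨a, b, ha, hb, hb0, hf⟩
    have hea : φ a = C a := by
      rw [expInv, AlgHom.mem_equalizer, IsScalarTower.toAlgHom_apply,
        Polynomial.algebraMap_eq] at ha
      exact ha
    have heb : φ b = C b := by
      rw [expInv, AlgHom.mem_equalizer, IsScalarTower.toAlgHom_apply,
        Polynomial.algebraMap_eq] at hb
      exact hb
    rw [hf, map_div₀, map_div₀, hφ', hφ', hι, hι, hea, heb]
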